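/- arXiv:1305.6074 — 5 statements merged into one kernel-verified Lean document; each statement's English description precedes it below -/
import Mathlib

section
/- Let Δ be a finite alphabet and φ a substitution mapping each δ ∈ Δ to a language over Σ with ε ∈ φ(δ) for all δ ∈ Δ. Then for every nonempty word w ∈ Δ⁺ and every shortest nonempty word v of φ(w), there exists δ ∈ Δ such that v is a shortest nonempty word of φ(δ). -/
open Language

/-- A substitution mapping symbols to languages, extended multiplicatively to words. -/
def phiW {Δ A : Type} (φ : Δ → Language A) (w : List Δ) : Language A :=
  (w.map φ).prod

/-- Image of a language of words under the extended substitution. -/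
def phiL {Δ A : Type} (φ : Δ → Language A) (L : Set (List Δ)) : Language A :=
  ⋃ w ∈ L, phiW φ w

/-- The set of languages generated by a generator language `K` and substitution `φ`. -/
def RSet {Δ A : Type} (φ : Δ → Language A) (K : Language Δ) : Set (Language A) :=
  { L | ∃ w ∈ K, phiW φ w = L }

/-- Rational sets of regular languages. -/
def IsRSRL {A : Type} (R : Set (Language A)) : Prop :=
  ∃ (Δ : Type) (_ : Fintype Δ) (K : Language Δ) (φ : Δ → Language A),
    K.IsRegular ∧ ([] : List Δ) ∉ K ∧ (∀ δ, (φ δ).IsRegular) ∧ R = RSet φ K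

/-- The set of shortest nonempty words of a language. -/
def Smin {A : Type} (L : Language A) : Set (List A) :=
  { w | w ∈ L ∧ w ≠ [] ∧ ∀ v ∈ L, v ≠ [] → w.length ≤ v.length }

lemma phiW_nil {Δ A : Type} (φ : Δ → Language A) : phiW φ [] = 1 := rfl

lemma phiW_cons {Δ A : Type} (φ : Δ → Language A) (δ : Δ) (t : List Δ) :
    phiW φ (δ :: t) = φ δ * phiW φ t := by
  simp [phiW]

lemma nil_mem_phiW {Δ A : Type} (φ : Δ → Language A)
    (hε : ∀ δ, ([] : List A) ∈ φ δ) (w : List Δ) : ([] : List A) ∈ phiW φ w := by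
  induction w with
  | nil => exact rfl
  | cons c s ihs => rw [phiW_cons]; exact ⟨[], hε c, [], ihs, rfl⟩

lemma mem_phiW_of_mem {Δ A : Type} (φ : Δ → Language A)
    (hε : ∀ δ, ([] : List A) ∈ φ δ) (w : List Δ) (δ : Δ) (hδ : δ ∈ w)
    (u : List A) (hu : u ∈ φ δ) : u ∈ phiW φ w := by
  induction w with
  | nil => simp at hδ
  | cons b t ih =>
    rw [phiW_cons]
    rcases List.mem_cons.mp hδ with h | h
    · subst h
      exact ⟨u, hu, [], nil_mem_phiW φ hε t, by simp⟩
    · exact ⟨[], hε b, u, ih h, by simp⟩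

lemma factor_of_mem_phiW {Δ A : Type} (φ : Δ → Language A)
    (w : List Δ) (v : List A) (hv : v ∈ phiW φ w) (hne : v ≠ []) :
    ∃ δ ∈ w, ∃ x a y, a ∈ φ δ ∧ a ≠ [] ∧ v = x ++ a ++ y := by
  induction w generalizing v with
  | nil =>
    rw [phiW_nil] at hv
    exact absurd hv hne
  | cons b t ih =>
    rw [phiW_cons] at hv
    rcases hv with ⟨a, ha, c, hc, rfl⟩
    by_cases h : a = []
    · subst h
      simp only [List.nil_append] at *
      rcases ih c hc hne with ⟨δ, hδ, x, a', y, h1, h2, h3⟩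
      exact ⟨δ, List.mem_cons_of_mem _ hδ, x, a', y, h1, h2, h3⟩
    · exact ⟨b, List.mem_cons_self, [], a, c, ha, h, by simp⟩

/-- If `ε ∈ φ(δ)` for all `δ`, then every shortest nonempty word of `φ(w)`
is a shortest nonempty word of some `φ(δ)`. -/
theorem stmt5 (Δ A : Type) [Fintype Δ] (φ : Δ → Language A)
    (hε : ∀ δ, ([] : List A) ∈ φ δ) (w : List Δ) (hw : w ≠ [])
    (v : List A) (hv : v ∈ Smin (phiW φ w)) :
    ∃ δ : Δ, v ∈ Smin (φ δ) := by
  obtain ⟨hvmem, hvne, hvmin⟩ := hv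
  obtain ⟨δ, hδw, x, a, y, ha, hane, hfac⟩ := factor_of_mem_phiW φ w v hvmem hvne
  have haW : a ∈ phiW φ w := mem_phiW_of_mem φ hε w δ hδw a ha
  have hlen : v.length ≤ a.length := hvmin a haW hane
  have hxy : x = [] ∧ y = [] := by
    have := congrArg List.length hfac
    simp only [List.length_append] at this
    constructor <;> [skip; skip] <;>
      (rw [← List.length_eq_zero_iff]; omega)
  obtain ⟨rfl, rfl⟩ := hxy
  simp only [List.nil_append, List.append_nil] at hfac
  subst hfac
  exact ⟨δ, ha, hvne, fun u hu hune =>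
    hvmin u (mem_phiW_of_mem φ hε w δ hδw u hu) hune⟩
end

section
/- The set M = { {b} ∪ { aⁱ | 1 ≤ i ≤ n+1 } | n ∈ ℕ } of regular languages over {a,b} is not a rational set of regular languages. -/
open Language

/-- The language `{b} ∪ {aⁱ | 1 ≤ i ≤ n+1}` with `a = 0`, `b = 1`. -/
def Ln (n : ℕ) : Language (Fin 2) :=
  { w | w = [(1 : Fin 2)] ∨
        ∃ i : ℕ, 1 ≤ i ∧ i ≤ n + 1 ∧ w = List.replicate i (0 : Fin 2) }

/-- The only word of `Ln n` containing the letter `1` is `[1]`. -/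
lemma key (n : ℕ) (t : List (Fin 2)) (h1 : (1 : Fin 2) ∈ t) (ht : t ∈ Ln n) :
    t = [(1 : Fin 2)] := by
  rcases ht with rfl | ⟨i, -, -, rfl⟩
  · rfl
  · exact absurd (List.eq_of_mem_replicate h1) (by decide)

/-- If a product of two languages equals `Ln n`, one factor is trivial. -/
lemma factor_lemma (n : ℕ) (X P : Language (Fin 2)) (h : X * P = Ln n) :
    (X = 1 ∧ P = Ln n) ∨ (X = Ln n ∧ P = 1) := by
  have hb : [(1 : Fin 2)] ∈ X * P := by rw [h]; exact Or.inl rfl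
  rw [Language.mem_mul] at hb
  obtain ⟨u, hu, v, hv, huv⟩ := hb
  cases u with
  | nil =>
    simp only [List.nil_append] at huv
    subst huv
    left
    have hX : X = 1 := by
      ext t
      simp only [Language.mem_one]
      constructor
      · intro ht
        by_contra hne
        have hmem : t ++ [(1 : Fin 2)] ∈ Ln n := by
          rw [← h]; exact Language.mem_mul.mpr ⟨t, ht, _, hv, rfl⟩
        have := key n _ (by simp) hmem
        rcases List.append_eq_cons_iff.mp this with ⟨rfl, -⟩ | ⟨a, rfl, ha⟩
        · exact hne rfl
        · exact absurd ha (by simp)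
      · rintro rfl; exact hu
    exact ⟨hX, by rw [← h, hX, one_mul]⟩
  | cons a u' =>
    have ha : a = 1 ∧ u' = [] ∧ v = [] := by
      have h2 := huv
      simp only [List.cons_append, List.cons.injEq] at h2
      obtain ⟨h1, h2⟩ := h2
      have h3 := List.append_eq_nil_iff.mp h2
      exact ⟨h1, h3.1, h3.2⟩
    obtain ⟨rfl, rfl, rfl⟩ := ha
    right
    have hP : P = 1 := by
      ext t
      simp only [Language.mem_one]
      constructor
      · intro ht
        by_contra hne
        have hmem : [(1 : Fin 2)] ++ t ∈ Ln n := by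
          rw [← h]; exact Language.mem_mul.mpr ⟨_, hu, t, ht, rfl⟩
        have h4 := key n _ (by simp) hmem
        have : t = [] := by simpa using h4
        exact hne this
      · rintro rfl; exact hv
    exact ⟨by rw [← h, hP, mul_one], hP⟩

/-- If a product of a list of languages equals `Ln n`, some factor equals `Ln n`. -/
lemma prod_lemma (n : ℕ) :
    ∀ Xs : List (Language (Fin 2)), Xs.prod = Ln n → ∃ X ∈ Xs, X = Ln n := by
  intro Xs
  induction Xs with
  | nil =>
    intro h
    exfalso
    have : [(1 : Fin 2)] ∈ ([] : List (Language (Fin 2))).prod := by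
      rw [h]; exact Or.inl rfl
    simpa [Language.mem_one] using this
  | cons X Ys ih =>
    intro h
    rw [List.prod_cons] at h
    rcases factor_lemma n X Ys.prod h with ⟨-, hP⟩ | ⟨hX, -⟩
    · obtain ⟨Y, hY, hYe⟩ := ih hP
      exact ⟨Y, List.mem_cons_of_mem _ hY, hYe⟩
    · exact ⟨X, List.mem_cons_self, hX⟩

lemma Ln_le {n m : ℕ} (h : Ln n = Ln m) : n ≤ m := by
  have hmem : List.replicate (n + 1) (0 : Fin 2) ∈ Ln n :=
    Or.inr ⟨n + 1, Nat.le_add_left _ _, le_refl _, rfl⟩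
  rw [h] at hmem
  rcases hmem with heq | ⟨i, -, hi, heq⟩
  · exact absurd (List.eq_of_mem_replicate (heq ▸ List.mem_singleton_self (1 : Fin 2)))
      (by decide)
  · have : n + 1 = i := by
      have := congrArg List.length heq
      simpa using this
    omega

lemma Ln_inj : Function.Injective Ln := fun _ _ h => le_antisymm (Ln_le h) (Ln_le h.symm)

/-- The set `M = { {b} ∪ {aⁱ | 1 ≤ i ≤ n+1} | n ∈ ℕ }` (with `a = 0`, `b = 1`)
is not an RSRL. -/
theorem stmt8 :
    ¬ IsRSRL { L : Language (Fin 2) | ∃ n : ℕ,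
        L = { w | w = [(1 : Fin 2)] ∨
              ∃ i : ℕ, 1 ≤ i ∧ i ≤ n + 1 ∧ w = List.replicate i (0 : Fin 2) } } := by
  rintro ⟨Δ, hF, K, φ, -, -, -, hR⟩
  have hmem : ∀ n : ℕ, ∃ w ∈ K, phiW φ w = Ln n := by
    intro n
    have : Ln n ∈ RSet φ K := by rw [← hR]; exact ⟨n, rfl⟩
    exact this
  have hδ : ∀ n : ℕ, ∃ δ : Δ, φ δ = Ln n := by
    intro n
    obtain ⟨w, -, hw⟩ := hmem n
    obtain ⟨X, hX, hXe⟩ := prod_lemma n (w.map φ) hw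
    obtain ⟨δ, -, rfl⟩ := List.mem_map.mp hX
    exact ⟨δ, hXe⟩
  choose δ hδe using hδ
  have hinj : Function.Injective δ := fun n m h => Ln_inj (by rw [← hδe n, ← hδe m, h])
  haveI : Finite Δ := Finite.of_fintype Δ
  obtain ⟨n, m, hne, he⟩ := Finite.exists_ne_map_eq_of_infinite δ
  exact hne (hinj he)
end

section
/- Point-wise union does not preserve rationality: for the RSRL R = (L(δ₁δ₂*), φ) with φ(δ₁) = {a} and φ(δ₂) = {a, ε}, and the regular language Q = {b}, the set R ⊍ Q = { L ∪ {b} | L ∈ R } = { {b} ∪ { aⁱ | 1 ≤ i ≤ n+1 } | n ∈ ℕ } is not a rational set of regular languages. -/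
open Language Computability

namespace S14

def Ln (n : ℕ) : Language (Fin 2) :=
  { w | w = [(1 : Fin 2)] ∨ ∃ i : ℕ, 1 ≤ i ∧ i ≤ n + 1 ∧ w = List.replicate i (0 : Fin 2) }

def φ₀ : Fin 2 → Language (Fin 2) :=
  fun δ => if δ = 0 then ({[(0 : Fin 2)]} : Language (Fin 2))
    else ({[], [(0 : Fin 2)]} : Language (Fin 2))

theorem phiW_nil {Δ A : Type} (φ : Δ → Language A) : phiW φ [] = 1 := rfl

theorem phiW_cons {Δ A : Type} (φ : Δ → Language A) (d : Δ) (w : List Δ) :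
    phiW φ (d :: w) = φ d * phiW φ w := by
  simp [phiW]

theorem phiW_append {Δ A : Type} (φ : Δ → Language A) (u v : List Δ) :
    phiW φ (u ++ v) = phiW φ u * phiW φ v := by
  simp [phiW]

theorem Mn (n : ℕ) :
    phiW φ₀ (List.replicate n 1) =
      {w | ∃ i : ℕ, i ≤ n ∧ w = List.replicate i (0 : Fin 2)} := by
  induction n with
  | zero =>
    ext x
    simp only [List.replicate_zero, phiW_nil, Language.mem_one, Set.mem_setOf_eq, Nat.le_zero]
    constructor
    · rintro rfl; exact ⟨0, rfl, rfl⟩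
    · rintro ⟨i, rfl, rfl⟩; rfl
  | succ n ih =>
    rw [List.replicate_succ, phiW_cons, ih]
    have h1 : φ₀ 1 = ({[], [(0 : Fin 2)]} : Language (Fin 2)) := by
      simp [φ₀]
    rw [h1]
    ext x
    refine Language.mem_mul.trans ?_
    constructor
    · rintro ⟨a, ha, b, ⟨i, hi, rfl⟩, rfl⟩
      rcases ha with rfl | rfl
      · exact ⟨i, by omega, by simp⟩
      · exact ⟨i + 1, by omega, by rw [List.replicate_succ]; rfl⟩
    · rintro ⟨i, hi, rfl⟩
      rcases Nat.lt_or_ge i (n + 1) with h | h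
      · exact ⟨[], Set.mem_insert _ _, List.replicate i 0, ⟨i, by omega, rfl⟩, by simp⟩
      · have : i = n + 1 := by omega
        subst this
        exact ⟨[0], Set.mem_insert_iff.mpr (Or.inr rfl), List.replicate n 0,
          ⟨n, le_refl _, rfl⟩, by rw [List.replicate_succ]; rfl⟩

theorem An (n : ℕ) :
    phiW φ₀ ((0 : Fin 2) :: List.replicate n 1) =
      {w | ∃ i : ℕ, 1 ≤ i ∧ i ≤ n + 1 ∧ w = List.replicate i (0 : Fin 2)} := by
  rw [phiW_cons, Mn]
  have h0 : φ₀ 0 = ({[(0 : Fin 2)]} : Language (Fin 2)) := by simp [φ₀]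
  rw [h0]
  ext x
  refine Language.mem_mul.trans ?_
  constructor
  · rintro ⟨a, ha, b, ⟨i, hi, rfl⟩, rfl⟩
    change a = [0] at ha; subst ha
    exact ⟨i + 1, by omega, by omega, by rw [List.replicate_succ]; rfl⟩
  · rintro ⟨i, h1, h2, rfl⟩
    obtain ⟨j, rfl⟩ : ∃ j, i = j + 1 := ⟨i - 1, by omega⟩
    exact ⟨[0], rfl, List.replicate j 0, ⟨j, by omega, rfl⟩, by rw [List.replicate_succ]; rfl⟩

theorem flatten_all_singleton {A : Type} (c : A) (L : List (List A))
    (h : ∀ y ∈ L, y = [c]) : L.flatten = List.replicate L.length c := by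
  induction L with
  | nil => rfl
  | cons a L ih =>
    rw [List.flatten_cons, h a (by simp), List.length_cons, List.replicate_succ,
      ih fun y hy => h y (by simp [hy])]
    rfl

theorem memK0 (w : List (Fin 2)) :
    w ∈ (({[(0 : Fin 2)]} : Language (Fin 2)) * ({[(1 : Fin 2)]} : Language (Fin 2))∗) ↔
      ∃ n : ℕ, w = (0 : Fin 2) :: List.replicate n 1 := by
  rw [Language.mem_mul]
  constructor
  · rintro ⟨a, ha, b, hb, rfl⟩
    change a = [0] at ha; subst ha
    rw [Language.mem_kstar] at hb
    obtain ⟨L, rfl, hL⟩ := hb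
    exact ⟨L.length, by rw [flatten_all_singleton (1 : Fin 2) L fun y hy => (hL y hy : _)]; rfl⟩
  · rintro ⟨n, rfl⟩
    refine ⟨[0], rfl, List.replicate n 1, ?_, rfl⟩
    have h2 := Language.join_mem_kstar (l := ({[(1 : Fin 2)]} : Language (Fin 2)))
      (L := List.replicate n [(1 : Fin 2)]) (by intro y hy; exact List.eq_of_mem_replicate hy)
    rwa [List.flatten_replicate_singleton] at h2

theorem Ln_inj {n m : ℕ} (h : Ln n = Ln m) : n = m := by
  have key : ∀ a b : ℕ, Ln a = Ln b → a ≤ b := by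
    intro a b hab
    have h1 : List.replicate (a + 1) (0 : Fin 2) ∈ Ln b := by
      rw [← hab]; exact Or.inr ⟨a + 1, by omega, le_refl _, rfl⟩
    rcases h1 with h1 | ⟨i, _, hi2, hi3⟩
    · rw [List.replicate_succ] at h1; simp at h1
    · have : a + 1 = i := by
        have := congrArg List.length hi3; simpa using this
      omega
  exact le_antisymm (key n m h) (key m n h.symm)

theorem one_not_mem_rep {i : ℕ} (h : (1 : Fin 2) ∈ List.replicate i (0 : Fin 2)) : False := by
  have := List.eq_of_mem_replicate h
  simp at this

end S14
-- re-open
namespace S14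

theorem Ln_eq (n : ℕ) :
    phiW φ₀ ((0 : Fin 2) :: List.replicate n 1) + ({[(1 : Fin 2)]} : Language (Fin 2)) = Ln n := by
  rw [An]
  ext x
  refine (Language.mem_add _ _ _).trans ?_
  constructor
  · rintro (⟨i, h1, h2, rfl⟩ | hx)
    · exact Or.inr ⟨i, h1, h2, rfl⟩
    · exact Or.inl hx
  · rintro (rfl | ⟨i, h1, h2, rfl⟩)
    · exact Or.inr rfl
    · exact Or.inl ⟨i, h1, h2, rfl⟩

theorem part1 :
    { L' : Language (Fin 2) | ∃ L ∈ RSet φ₀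
        (({[(0 : Fin 2)]} : Language (Fin 2)) * ({[(1 : Fin 2)]} : Language (Fin 2))∗),
        L' = L + ({[(1 : Fin 2)]} : Language (Fin 2)) } =
      { L : Language (Fin 2) | ∃ n : ℕ, L = Ln n } := by
  ext L'
  simp only [Set.mem_setOf_eq]
  constructor
  · rintro ⟨L, ⟨w, hwK, rfl⟩, rfl⟩
    obtain ⟨n, rfl⟩ := (memK0 w).mp hwK
    exact ⟨n, Ln_eq n⟩
  · rintro ⟨n, rfl⟩
    exact ⟨_, ⟨_, (memK0 _).mpr ⟨n, rfl⟩, rfl⟩, (Ln_eq n).symm⟩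

theorem part2 : ¬ IsRSRL { L : Language (Fin 2) | ∃ n : ℕ, L = Ln n } := by
  classical
  rintro ⟨Δ, _inst, K, φ, hKreg, hε, hφ, hR⟩
  obtain ⟨σ, instσ, M, hM⟩ := hKreg
  set p := Fintype.card σ with hp
  have hmem : ∀ n : ℕ, ∃ w, w ∈ K ∧ phiW φ w = Ln n := by
    intro n
    have h : Ln n ∈ RSet φ K := by
      rw [← hR]; exact ⟨n, rfl⟩
    obtain ⟨w, hw, hw2⟩ := h
    exact ⟨w, hw, hw2⟩
  have hall : ∀ w, w ∈ K → ∃ n, phiW φ w = Ln n := by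
    intro w hw
    have h : phiW φ w ∈ RSet φ K := ⟨w, hw, rfl⟩
    rw [← hR] at h
    exact h
  let f : List Δ → ℕ := fun w => if h : ∃ n, phiW φ w = Ln n then h.choose else 0
  have hTsub : {n : ℕ | ∃ w, w ∈ K ∧ w.length < p ∧ phiW φ w = Ln n} ⊆
      f '' {w : List Δ | w.length < p} := by
    rintro n ⟨w, _hwK, hwl, hwL⟩
    refine ⟨w, hwl, ?_⟩
    have hex : ∃ m, phiW φ w = Ln m := ⟨n, hwL⟩
    have h2 : Ln hex.choose = Ln n := by rw [← hex.choose_spec, hwL]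
    simp only [f, dif_pos hex]
    exact Ln_inj h2
  have hTfin : {n : ℕ | ∃ w, w ∈ K ∧ w.length < p ∧ phiW φ w = Ln n}.Finite :=
    ((List.finite_length_lt Δ p).image f).subset hTsub
  obtain ⟨n, hn⟩ := hTfin.infinite_compl.nonempty
  simp only [Set.mem_compl_iff, Set.mem_setOf_eq, not_exists] at hn
  have hexk : ∃ k, ∃ w, (w ∈ K ∧ phiW φ w = Ln n) ∧ w.length = k := by
    obtain ⟨w, h1, h2⟩ := hmem n
    exact ⟨w.length, w, ⟨h1, h2⟩, rfl⟩
  obtain ⟨w, ⟨hwK, hwL⟩, hwlen⟩ := Nat.find_spec hexk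
  have hmin : ∀ w', w' ∈ K → phiW φ w' = Ln n → w.length ≤ w'.length := by
    intro w' h1 h2
    by_contra hlt
    push_neg at hlt
    rw [hwlen] at hlt
    exact Nat.find_min hexk hlt ⟨w', ⟨h1, h2⟩, rfl⟩
  have hplen : p ≤ w.length := by
    by_contra h
    push_neg at h
    exact hn w ⟨hwK, h, hwL⟩
  rw [← hM] at hwK
  obtain ⟨u, v, x, hsplit, _hlen2, hvne, hpump⟩ := M.pumping_lemma hwK hplen
  have hKsub : ({u} : Language Δ) * ({v} : Language Δ)∗ * ({x} : Language Δ) ≤ K := by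
    rw [← hM]; exact hpump
  have hux : u ++ x ∈ K := by
    apply hKsub
    have : (u ++ []) ++ x ∈ ({u} : Language Δ) * ({v} : Language Δ)∗ * ({x} : Language Δ) :=
      Language.append_mem_mul
        (Language.append_mem_mul (Set.mem_singleton u) (Language.nil_mem_kstar _))
        (Set.mem_singleton x)
    rw [List.append_nil] at this; exact this
  have huvvx : u ++ (v ++ v) ++ x ∈ K := by
    apply hKsub
    have hv2 : v ++ v ∈ ({v} : Language Δ)∗ := by
      have h := Language.join_mem_kstar (l := ({v} : Language Δ)) (L := [v, v])
        (by intro y hy; simp only [List.mem_cons, List.not_mem_nil, or_false] at hy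
            rcases hy with rfl | rfl <;> rfl)
      simpa using h
    exact Language.append_mem_mul
      (Language.append_mem_mul (Set.mem_singleton u) hv2) (Set.mem_singleton x)
  subst hsplit
  rw [phiW_append, phiW_append] at hwL
  set P := phiW φ u with hP
  set V := phiW φ v with hV'
  set X := phiW φ x with hX
  by_cases hV : ∃ v', v' ∈ V ∧ v' ≠ []
  · obtain ⟨v', hv'V, hv'ne⟩ := hV
    obtain ⟨m, hm⟩ := hall _ huvvx
    rw [phiW_append, phiW_append, phiW_append] at hm
    rw [← hP, ← hV', ← hX] at hm
    have h1 : [(1 : Fin 2)] ∈ P * (V * V) * X := by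
      rw [hm]; exact Or.inl rfl
    obtain ⟨α, hα, xx, hxx, heq⟩ := Language.mem_mul.mp h1
    obtain ⟨pp, hpp, γ, hγ, heq2⟩ := Language.mem_mul.mp hα
    obtain ⟨v₁, hv₁, v₂, hv₂, heq3⟩ := Language.mem_mul.mp hγ
    subst heq2; subst heq3
    have hlen : pp.length + v₁.length + v₂.length + xx.length = 1 := by
      have h := congrArg List.length heq
      simp only [List.length_append, List.length_cons, List.length_nil] at h
      omega
    have hcase : v₁ = [] ∨ v₂ = [] := by
      rcases Nat.eq_zero_or_pos v₁.length with h | h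
      · exact Or.inl (List.length_eq_zero_iff.mp h)
      · exact Or.inr (List.length_eq_zero_iff.mp (by omega))
    have hv'len : 1 ≤ v'.length := List.length_pos_iff.mpr hv'ne
    rcases hcase with rfl | rfl
    · have hy : (pp ++ (v' ++ v₂)) ++ xx ∈ P * (V * V) * X :=
        Language.append_mem_mul
          (Language.append_mem_mul hpp (Language.append_mem_mul hv'V hv₂)) hxx
      rw [hm] at hy
      have h1mem : (1 : Fin 2) ∈ (pp ++ (v' ++ v₂)) ++ xx := by
        have h0 : (1 : Fin 2) ∈ (pp ++ ([] ++ v₂)) ++ xx := by rw [heq]; simp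
        simp only [List.mem_append, List.not_mem_nil, false_or] at h0 ⊢
        tauto
      have hylen : 2 ≤ ((pp ++ (v' ++ v₂)) ++ xx).length := by
        simp only [List.length_append, List.length_nil] at hlen ⊢
        omega
      rcases hy with hy | ⟨i, _, _, hy⟩
      · rw [hy] at hylen; simp at hylen
      · rw [hy] at h1mem; exact one_not_mem_rep h1mem
    · have hy : (pp ++ (v₁ ++ v')) ++ xx ∈ P * (V * V) * X :=
        Language.append_mem_mul
          (Language.append_mem_mul hpp (Language.append_mem_mul hv₁ hv'V)) hxx
      rw [hm] at hy
      have h1mem : (1 : Fin 2) ∈ (pp ++ (v₁ ++ v')) ++ xx := by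
        have h0 : (1 : Fin 2) ∈ (pp ++ (v₁ ++ [])) ++ xx := by rw [heq]; simp
        simp only [List.mem_append, List.not_mem_nil, or_false] at h0 ⊢
        tauto
      have hylen : 2 ≤ ((pp ++ (v₁ ++ v')) ++ xx).length := by
        simp only [List.length_append, List.length_nil] at hlen ⊢
        omega
      rcases hy with hy | ⟨i, _, _, hy⟩
      · rw [hy] at hylen; simp at hylen
      · rw [hy] at h1mem; exact one_not_mem_rep h1mem
  · push_neg at hV
    have hnilV : ([] : List (Fin 2)) ∈ V := by
      have h1 : [(1 : Fin 2)] ∈ P * V * X := by rw [hwL]; exact Or.inl rfl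
      obtain ⟨α, hα, xx, _, _⟩ := Language.mem_mul.mp h1
      obtain ⟨pp, _, v₁, hv₁, _⟩ := Language.mem_mul.mp hα
      have := hV v₁ hv₁
      rwa [this] at hv₁
    have hPX : P * X = Ln n := by
      rw [← hwL]
      ext z
      constructor
      · intro hz
        obtain ⟨pz, hpz, xz, hxz, rfl⟩ := Language.mem_mul.mp hz
        have h2 : (pz ++ []) ++ xz ∈ P * V * X :=
          Language.append_mem_mul (Language.append_mem_mul hpz hnilV) hxz
        simpa using h2
      · intro hz
        obtain ⟨α, hα, xz, hxz, rfl⟩ := Language.mem_mul.mp hz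
        obtain ⟨pz, hpz, v₁, hv₁, rfl⟩ := Language.mem_mul.mp hα
        rw [hV v₁ hv₁]
        exact Language.mem_mul.mpr ⟨pz, hpz, xz, hxz, by simp⟩
    have huxL : phiW φ (u ++ x) = Ln n := by rw [phiW_append, ← hP, ← hX, hPX]
    have := hmin (u ++ x) hux huxL
    have hvlen : 1 ≤ v.length := List.length_pos_iff.mpr hvne
    simp only [List.length_append] at this
    omega

end S14

/-- Point-wise union does not preserve rationality: for
`R = (δ₁δ₂*, φ)` with `φ(δ₁) = {a}`, `φ(δ₂) = {a, ε}` and `Q = {b}`,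
the set `{ L ∪ {b} | L ∈ R } = { {b} ∪ {aⁱ | 1 ≤ i ≤ n+1} | n ∈ ℕ }`
is not an RSRL (`a = 0`, `b = 1`, `δ₁ = 0`, `δ₂ = 1`). -/
theorem stmt14 :
    { L' : Language (Fin 2) |
        ∃ L ∈ RSet (fun δ : Fin 2 => if δ = 0 then ({[(0 : Fin 2)]} : Language (Fin 2))
                      else ({[], [(0 : Fin 2)]} : Language (Fin 2)))
              (({[(0 : Fin 2)]} : Language (Fin 2)) * ({[(1 : Fin 2)]} : Language (Fin 2))∗),
          L' = L + ({[(1 : Fin 2)]} : Language (Fin 2)) } =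
      { L : Language (Fin 2) | ∃ n : ℕ,
          L = { w | w = [(1 : Fin 2)] ∨
                ∃ i : ℕ, 1 ≤ i ∧ i ≤ n + 1 ∧ w = List.replicate i (0 : Fin 2) } } ∧
    ¬ IsRSRL { L : Language (Fin 2) | ∃ n : ℕ,
        L = { w | w = [(1 : Fin 2)] ∨
              ∃ i : ℕ, 1 ≤ i ∧ i ≤ n + 1 ∧ w = List.replicate i (0 : Fin 2) } } := by
  exact ⟨S14.part1, S14.part2⟩
end

section
/- If R₁ = (K₁, φ) and R₂ are finite RSRLs with the same substitution φ, then R₁ \ R₂ (set difference as sets of languages) is a finite RSRL expressible as (K₃, φ) for K₃ = { w ∈ K₁ | φ(w) ∉ R₂ } ⊆ K₁. -/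
open Language

/-- Every finite language is regular (via the residual DFA). -/
lemma finite_lang_isRegular {T : Type} (F : Language T)
    (hF : (F : Set (List T)).Finite) : F.IsRegular := by
  classical
  set S : Set (List T) := {v | ∃ w ∈ (F : Set (List T)), v <:+ w} with hS
  have hSfin : S.Finite := by
    have hEq : S = ⋃ w ∈ (F : Set (List T)), {v | v <:+ w} := by
      ext v; simp [hS]
    rw [hEq]
    refine hF.biUnion (fun w _ => ?_)
    refine (w.tails.finite_toSet).subset ?_
    intro v hv
    simpa [List.mem_tails] using hv
  haveI : Fintype {L : Set (List T) // L ⊆ S} := hSfin.finite_subsets.fintype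
  have hFS : (F : Set (List T)) ∈ {L : Set (List T) | L ⊆ S} :=
    fun w hw => ⟨w, hw, List.suffix_refl w⟩
  let M : DFA T {L : Set (List T) // L ⊆ S} :=
    { step := fun q a => ⟨{v | a :: v ∈ q.val},
        fun v hv => by
          obtain ⟨w, hw, hsuf⟩ := q.2 hv
          exact ⟨w, hw, (List.suffix_cons a v).trans hsuf⟩⟩
      start := ⟨F, hFS⟩
      accept := {q | [] ∈ q.val} }
  have key : ∀ (w : List T) (q : {L : Set (List T) // L ⊆ S}),
      (M.evalFrom q w).val = {v | w ++ v ∈ q.val} := by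
    intro w
    induction w with
    | nil => intro q; simp [DFA.evalFrom]
    | cons a w ih =>
        intro q
        have : M.evalFrom q (a :: w) = M.evalFrom (M.step q a) w := rfl
        rw [this, ih]
        rfl
  refine ⟨_, inferInstance, M, ?_⟩
  ext w
  have : w ∈ M.accepts ↔ [] ∈ (M.evalFrom M.start w).val := Iff.rfl
  rw [this, key]
  simp [M]
  exact Iff.rfl

/-- Difference of finite RSRLs over the same substitution: `R₁ \ R₂` equals the
RSRL `(K₃, φ)` with `K₃ = { w ∈ K₁ | φ(w) ∉ R₂ }`, and it is a finite RSRL. -/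
theorem stmt16 (Δ A : Type) [Fintype Δ] (φ : Δ → Language A)
    (hφ : ∀ δ, (φ δ).IsRegular) (K₁ K₂ : Language Δ)
    (h₁ : K₁.IsRegular) (h₂ : K₂.IsRegular)
    (hne₁ : ([] : List Δ) ∉ K₁) (hne₂ : ([] : List Δ) ∉ K₂)
    (hf₁ : (RSet φ K₁).Finite) (hf₂ : (RSet φ K₂).Finite) :
    RSet φ K₁ \ RSet φ K₂ =
      RSet φ ({ w | w ∈ K₁ ∧ phiW φ w ∉ RSet φ K₂ } : Language Δ) ∧
    (RSet φ K₁ \ RSet φ K₂).Finite ∧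
    IsRSRL (RSet φ K₁ \ RSet φ K₂) := by
  classical
  have hEq : RSet φ K₁ \ RSet φ K₂ =
      RSet φ ({ w | w ∈ K₁ ∧ phiW φ w ∉ RSet φ K₂ } : Language Δ) := by
    ext L
    constructor
    · rintro ⟨⟨w, hw, rfl⟩, hL2⟩
      exact ⟨w, ⟨hw, hL2⟩, rfl⟩
    · rintro ⟨w, ⟨hw, hw2⟩, rfl⟩
      exact ⟨⟨w, hw, rfl⟩, hw2⟩
  have hFin : (RSet φ K₁ \ RSet φ K₂).Finite := hf₁.diff
  refine ⟨hEq, hFin, ?_⟩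
  -- witness words for each language in the difference
  have hKey : ∀ L ∈ RSet φ K₁ \ RSet φ K₂,
      ∃ w, w ∈ K₁ ∧ phiW φ w ∉ RSet φ K₂ ∧ phiW φ w = L := by
    rintro L ⟨⟨w, hw, rfl⟩, hL2⟩
    exact ⟨w, hw, hL2, rfl⟩
  let f : Language A → List Δ := fun L =>
    if h : L ∈ RSet φ K₁ \ RSet φ K₂ then (hKey L h).choose else []
  let K' : Language Δ := f '' (RSet φ K₁ \ RSet φ K₂)
  have hmem : ∀ w ∈ (K' : Set (List Δ)), ∃ L ∈ RSet φ K₁ \ RSet φ K₂,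
      w ∈ K₁ ∧ phiW φ w ∉ RSet φ K₂ ∧ phiW φ w = L := by
    rintro w ⟨L, hL, rfl⟩
    have : f L = (hKey L hL).choose := dif_pos hL
    rw [this]
    exact ⟨L, hL, (hKey L hL).choose_spec⟩
  have hK'fin : (K' : Set (List Δ)).Finite := hFin.image f
  refine ⟨Δ, inferInstance, K', φ, finite_lang_isRegular K' hK'fin, ?_, hφ, ?_⟩
  · intro hnil
    obtain ⟨L, hL, h1, h2, h3⟩ := hmem [] hnil
    exact hne₁ h1
  · ext L
    constructor
    · intro hL
      have hfL : f L ∈ (K' : Set (List Δ)) := ⟨L, hL, rfl⟩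
      obtain ⟨L', hL', h1, h2, h3⟩ := hmem (f L) hfL
      have : f L = (hKey L hL).choose := dif_pos hL
      have h4 := (hKey L hL).choose_spec
      rw [← this] at h4
      exact ⟨f L, hfL, h4.2.2⟩
    · rintro ⟨w, hw, rfl⟩
      obtain ⟨L', hL', h1, h2, h3⟩ := hmem w hw
      rw [h3]; exact hL'
end

section
/- Let L = N₁S₁*N₂⋯N_mS_m*N_{m+1} where each N_h ∈ Δ* is a fixed word and each S_h ⊆ Δ* is a language, and let φ be a substitution into languages over Σ with ε ∈ φ(w) for every w ∈ S_h and every h. Then L has 1-word summaries under φ: for every finite F ⊆ L there is w ∈ L with φ(F) ⊆ φ(w). -/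
open Language Computability

/-- A set of words `M'` has 1-word summaries under `φ` if every finite subset
`F ⊆ M'` is summarized by a single word `w ∈ M'` with `φ(F) ⊆ φ(w)`. -/
def OneWordSummaries {Δ A : Type} (φ : Δ → Language A) (M' : Set (List Δ)) : Prop :=
  ∀ F ⊆ M', F.Finite → ∃ w ∈ M', phiL φ F ≤ phiW φ w

lemma phiW_append {Δ A : Type} (φ : Δ → Language A) (u v : List Δ) :
    phiW φ (u ++ v) = phiW φ u * phiW φ v := by
  simp [phiW]

lemma one_le_phiW {Δ A : Type} {φ : Δ → Language A} {v : List Δ}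
    (h : ([] : List A) ∈ phiW φ v) : 1 ≤ phiW φ v := by
  intro x hx
  change x ∈ (1 : Language A) at hx
  rw [Language.mem_one] at hx
  exact hx ▸ h

def Good {Δ A : Type} (φ : Δ → Language A) (M : Set (List Δ)) : Prop :=
  ∀ F ⊆ M, F.Finite → ∃ w ∈ M, ∀ u ∈ F, phiW φ u ≤ phiW φ w

lemma good_of_directed {Δ A : Type} (φ : Δ → Language A) (M : Set (List Δ))
    (hne : M.Nonempty)
    (hdir : ∀ u ∈ M, ∀ v ∈ M, ∃ w ∈ M, phiW φ u ≤ phiW φ w ∧ phiW φ v ≤ phiW φ w) :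
    Good φ M := by
  intro F hFM hF
  revert hFM
  refine Set.Finite.induction_on (motive := fun F _ => F ⊆ M →
      ∃ w ∈ M, ∀ u ∈ F, phiW φ u ≤ phiW φ w) F hF
    (fun _ => ⟨hne.choose, hne.choose_spec, by simp⟩) ?_
  intro a s _ _ ih hsub
  obtain ⟨w, hw, hws⟩ := ih (fun x hx => hsub (Set.mem_insert_of_mem _ hx))
  obtain ⟨w', hw', h1, h2⟩ := hdir a (hsub (Set.mem_insert _ _)) w hw
  exact ⟨w', hw', fun u hu => by
    rcases hu with rfl | hu
    · exact h1
    · exact (hws u hu).trans h2⟩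

lemma good_singleton {Δ A : Type} (φ : Δ → Language A) (N : List Δ) :
    Good φ ({N} : Language Δ) :=
  good_of_directed φ _ ⟨N, rfl⟩ (by
    intro u hu v hv
    replace hu : u = N := hu
    replace hv : v = N := hv
    exact ⟨N, rfl, by rw [hu], by rw [hv]⟩)

lemma nil_mem_phiW_of_kstar {Δ A : Type} {φ : Δ → Language A} {S : Language Δ}
    (hε : ∀ w ∈ S, ([] : List A) ∈ phiW φ w) :
    ∀ v ∈ S∗, ([] : List A) ∈ phiW φ v := by
  intro v hv
  rw [Language.mem_kstar] at hv
  obtain ⟨L, rfl, hL⟩ := hv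
  induction L with
  | nil => simp [phiW, Language.mem_one]
  | cons y L ih =>
    have h1 : ([] : List A) ∈ phiW φ y := hε y (hL y (by simp))
    have h2 := ih (fun z hz => hL z (by simp [hz]))
    rw [List.flatten_cons, phiW_append]
    exact ⟨[], h1, [], h2, rfl⟩

lemma good_kstar {Δ A : Type} {φ : Δ → Language A} {S : Language Δ}
    (hε : ∀ w ∈ S, ([] : List A) ∈ phiW φ w) :
    Good φ ((S∗ : Language Δ) : Set (List Δ)) := by
  refine good_of_directed φ _ ⟨[], S.nil_mem_kstar⟩ ?_
  intro u hu v hv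
  refine ⟨u ++ v, ?_, ?_, ?_⟩
  · rw [← kstar_mul_kstar (S : Language Δ)]
    exact ⟨u, hu, v, hv, rfl⟩
  · rw [phiW_append]
    calc phiW φ u = phiW φ u * 1 := (mul_one _).symm
    _ ≤ phiW φ u * phiW φ v :=
        mul_le_mul' le_rfl (one_le_phiW (nil_mem_phiW_of_kstar hε v hv))
  · rw [phiW_append]
    calc phiW φ v = 1 * phiW φ v := (one_mul _).symm
    _ ≤ phiW φ u * phiW φ v :=
        mul_le_mul' (one_le_phiW (nil_mem_phiW_of_kstar hε u hu)) le_rfl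

lemma good_mul {Δ A : Type} {φ : Δ → Language A} {M₁ M₂ : Language Δ}
    (h1 : Good φ M₁) (h2 : Good φ M₂) : Good φ ((M₁ * M₂ : Language Δ) : Set (List Δ)) := by
  obtain ⟨a, ha, -⟩ := h1 ∅ (Set.empty_subset _) Set.finite_empty
  obtain ⟨b, hb, -⟩ := h2 ∅ (Set.empty_subset _) Set.finite_empty
  refine good_of_directed φ _ ⟨a ++ b, a, ha, b, hb, rfl⟩ ?_
  rintro u ⟨u₁, hu₁, u₂, hu₂, rfl⟩ v ⟨v₁, hv₁, v₂, hv₂, rfl⟩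
  obtain ⟨w₁, hw₁, hs₁⟩ := h1 {u₁, v₁} (by rintro x (rfl | rfl) <;> assumption)
    ((Set.finite_singleton _).insert _)
  obtain ⟨w₂, hw₂, hs₂⟩ := h2 {u₂, v₂} (by rintro x (rfl | rfl) <;> assumption)
    ((Set.finite_singleton _).insert _)
  refine ⟨w₁ ++ w₂, ⟨w₁, hw₁, w₂, hw₂, rfl⟩, ?_, ?_⟩
  · rw [phiW_append, phiW_append]
    exact mul_le_mul' (hs₁ u₁ (by simp)) (hs₂ u₂ (by simp))
  · rw [phiW_append, phiW_append]
    exact mul_le_mul' (hs₁ v₁ (by simp)) (hs₂ v₂ (by simp))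

lemma good_list_prod {Δ A : Type} {φ : Δ → Language A} :
    ∀ (l : List (Language Δ)), (∀ M ∈ l, Good φ M) → Good φ l.prod := by
  intro l
  induction l with
  | nil =>
    intro _
    rw [List.prod_nil, Language.one_def]
    exact good_singleton φ ([] : List Δ)
  | cons M l ih =>
    intro h
    rw [List.prod_cons]
    exact good_mul (h M (by simp)) (ih fun M' hM' => h M' (by simp [hM']))

/-- Sufficient condition for 1-word summaries: a language
`L = N₁S₁*N₂⋯N_mS_m*N_{m+1}` has 1-word summaries provided `ε ∈ φ(w)` for
every `w ∈ S_h` and every `h`. -/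
theorem stmt18 (Δ A : Type) (φ : Δ → Language A) (m : ℕ)
    (N : Fin (m + 1) → List Δ) (S : Fin m → Language Δ)
    (hε : ∀ h : Fin m, ∀ w ∈ S h, ([] : List A) ∈ phiW φ w) :
    OneWordSummaries φ
      ((List.ofFn fun h : Fin m =>
          ({N h.castSucc} : Language Δ) * (S h)∗).prod * {N (Fin.last m)}) := by
  have hgood : Good φ (((List.ofFn fun h : Fin m =>
      ({N h.castSucc} : Language Δ) * (S h)∗).prod * {N (Fin.last m)} : Language Δ)
      : Set (List Δ)) := by
    refine good_mul ?_ (good_singleton φ (N (Fin.last m)))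
    refine good_list_prod _ ?_
    intro M hM
    rw [List.mem_ofFn] at hM
    obtain ⟨h, rfl⟩ := hM
    exact good_mul (good_singleton φ (N h.castSucc)) (good_kstar (hε h))
  intro F hF hFin
  obtain ⟨w, hw, hs⟩ := hgood F hF hFin
  refine ⟨w, hw, ?_⟩
  intro x hx
  change x ∈ (⋃ w ∈ F, (phiW φ w : Set (List A))) at hx
  simp only [phiL, Set.mem_iUnion] at hx
  obtain ⟨u, hx⟩ := hx
  obtain ⟨hu, hx⟩ := Set.mem_iUnion.mp hx
  exact hs u hu hx
end
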